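/- Let n ≥ 3 and let a, c, u, v, w ∈ ℂ with c ≠ 0 and a ≠ 1, and put M = [[a, (1−a)/c],[c, 0]]. Then M is invertible, and for every 1 ≤ i ≤ n−1 the n×n matrix u·Lᵢ(M) + v·Lᵢ(M)⁻¹ + w·Iₙ equals the block-diagonal matrix diag((u+v+w)·I_{i−1}, B, (u+v+w)·I_{n−i−1}), where B = [[ua + w, (u(1−a) + v)/c],[uc + vc/(1−a), −va/(1−a) + w]]. In particular, every Φ-type extension Φ_{u,v,w} of the homogeneous 2-local representation σᵢ ↦ Lᵢ(M) of Bₙ to SMₙ sends τᵢ to this matrix. -/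

import Mathlib

open Matrix

def loc2 (n i : ℕ) (P : Matrix (Fin 2) (Fin 2) ℂ) : Matrix (Fin n) (Fin n) ℂ :=
  Matrix.of fun r s =>
    if (r : ℕ) = i - 1 ∧ (s : ℕ) = i - 1 then P 0 0
    else if (r : ℕ) = i - 1 ∧ (s : ℕ) = i then P 0 1
    else if (r : ℕ) = i ∧ (s : ℕ) = i - 1 then P 1 0
    else if (r : ℕ) = i ∧ (s : ℕ) = i then P 1 1
    else if r = s then 1 else 0

def locg2 (n i : ℕ) (e : ℂ) (P : Matrix (Fin 2) (Fin 2) ℂ) : Matrix (Fin n) (Fin n) ℂ :=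
  Matrix.of fun r s =>
    if (r : ℕ) = i - 1 ∧ (s : ℕ) = i - 1 then P 0 0
    else if (r : ℕ) = i - 1 ∧ (s : ℕ) = i then P 0 1
    else if (r : ℕ) = i ∧ (s : ℕ) = i - 1 then P 1 0
    else if (r : ℕ) = i ∧ (s : ℕ) = i then P 1 1
    else if r = s then e else 0

set_option linter.unreachableTactic false
set_option linter.unnecessarySeqFocus false
set_option linter.unusedTactic false

lemma loc2_mul (n i : ℕ) (hi1 : 1 ≤ i) (hi : i < n) (P Q : Matrix (Fin 2) (Fin 2) ℂ) :
    loc2 n i P * loc2 n i Q = loc2 n i (P * Q) := by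
  have hi1' : i - 1 < n := lt_of_le_of_lt (Nat.sub_le _ _) hi
  set p : Fin n := ⟨i - 1, hi1'⟩ with hp
  set q : Fin n := ⟨i, hi⟩ with hq
  have hpq : p ≠ q := by
    simp only [Fin.ne_iff_vne, hp, hq]; omega
  ext r s
  rw [Matrix.mul_apply]
  rw [← Finset.add_sum_erase _ _ (Finset.mem_univ p),
      ← Finset.add_sum_erase _ _ (Finset.mem_erase.mpr ⟨hpq.symm, Finset.mem_univ q⟩)]
  have hA : ∀ k ∈ (Finset.univ.erase p).erase q,
      loc2 n i P r k * loc2 n i Q k s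
        = if r = k then loc2 n i Q k s else 0 := by
    intro k hk
    simp only [Finset.mem_erase, Finset.mem_univ, and_true] at hk
    obtain ⟨hkq, hkp⟩ := hk
    have h1 : (k : ℕ) ≠ i - 1 := fun h => hkp (Fin.ext h)
    have h2 : (k : ℕ) ≠ i := fun h => hkq (Fin.ext h)
    by_cases hrk : r = k
    · subst hrk
      simp [loc2, h1, h2]
    · have h3 : ¬ ((r:ℕ) = (k:ℕ)) := fun h => hrk (Fin.ext h)
      simp [loc2, h1, h2, hrk]
  rw [Finset.sum_congr rfl hA, Finset.sum_ite_eq]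
  simp only [Finset.mem_erase, Finset.mem_univ, and_true]
  have e1 : ∀ x : Fin n, (x = p) ↔ ((x : ℕ) = i - 1) := fun x => by rw [hp, Fin.ext_iff]
  have e2 : ∀ x : Fin n, (x = q) ↔ ((x : ℕ) = i) := fun x => by rw [hq, Fin.ext_iff]
  have e3 : (p : ℕ) = i - 1 := rfl
  have e4 : (q : ℕ) = i := rfl
  have e5 : (r = s) ↔ ((r : ℕ) = (s : ℕ)) := Fin.ext_iff
  have e1' : ∀ x : Fin n, (p = x) ↔ (i - 1 = (x : ℕ)) := fun x => by rw [hp, Fin.ext_iff]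
  have e2' : ∀ x : Fin n, (q = x) ↔ (i = (x : ℕ)) := fun x => by rw [hq, Fin.ext_iff]
  have hii : ¬ (i - 1 = i) := by omega
  have hii' : ¬ (i = i - 1) := by omega
  simp only [loc2, Matrix.of_apply, e1, e2, e1', e2', e3, e4, e5]
  by_cases hr1 : (r : ℕ) = i - 1 <;> by_cases hr2 : (r : ℕ) = i <;>
    by_cases hs1 : (s : ℕ) = i - 1 <;> by_cases hs2 : (s : ℕ) = i
  all_goals first
    | omega
    | (simp only [hr1, hr2, hs1, hs2, hii, hii', Matrix.mul_apply, Fin.sum_univ_two,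
        if_true, if_false, ite_true, ite_false, and_true, and_false, true_and, false_and,
        and_self, not_false_iff, not_true] <;>
       simp_all [eq_comm])

lemma loc2_one (n i : ℕ) (hi1 : 1 ≤ i) (hi : i < n) :
    loc2 n i (1 : Matrix (Fin 2) (Fin 2) ℂ) = 1 := by
  ext r s
  simp only [loc2, Matrix.of_apply, Matrix.one_apply]
  have e5 : (r = s) ↔ ((r : ℕ) = (s : ℕ)) := Fin.ext_iff
  split_ifs with h1 h2 h3 h4 h5 <;> simp_all <;> omega

theorem stmt4 (n : ℕ) (hn : 3 ≤ n) (a c u v w : ℂ) (hc : c ≠ 0) (ha : a ≠ 1) :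
    IsUnit !![a, (1 - a) / c; c, 0] ∧
    ∀ i : ℕ, 1 ≤ i → i ≤ n - 1 →
      u • loc2 n i !![a, (1 - a) / c; c, 0]
          + v • (loc2 n i !![a, (1 - a) / c; c, 0])⁻¹
          + w • (1 : Matrix (Fin n) (Fin n) ℂ)
        = locg2 n i (u + v + w)
            !![u * a + w, (u * (1 - a) + v) / c;
               u * c + v * c / (1 - a), -(v * a) / (1 - a) + w] := by
  have ha1 : (1 : ℂ) - a ≠ 0 := sub_ne_zero.mpr (Ne.symm ha)
  constructor
  · rw [Matrix.isUnit_iff_isUnit_det, isUnit_iff_ne_zero]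
    simp only [Matrix.det_fin_two_of]
    field_simp
    rw [mul_zero, zero_sub, neg_ne_zero]; exact ha1
  · intro i hi1 hin
    have hi : i < n := by omega
    set M : Matrix (Fin 2) (Fin 2) ℂ := !![a, (1 - a) / c; c, 0] with hM
    set N : Matrix (Fin 2) (Fin 2) ℂ := !![0, 1 / c; c / (1 - a), -a / (1 - a)] with hN
    have hMN : M * N = 1 := by
      ext r s
      fin_cases r <;> fin_cases s <;>
        simp [hM, hN, Matrix.mul_apply, Fin.sum_univ_two] <;> field_simp <;> ring
    have hinv : (loc2 n i M)⁻¹ = loc2 n i N := by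
      apply Matrix.inv_eq_right_inv
      rw [loc2_mul n i hi1 hi, hMN, loc2_one n i hi1 hi]
    rw [hinv]
    ext r s
    have e5 : (r = s) ↔ ((r : ℕ) = (s : ℕ)) := Fin.ext_iff
    simp only [loc2, locg2, hM, hN, Matrix.add_apply, Matrix.smul_apply, Matrix.of_apply,
      Matrix.one_apply, e5, smul_eq_mul]
    by_cases hr1 : (r : ℕ) = i - 1 <;> by_cases hr2 : (r : ℕ) = i <;>
      by_cases hs1 : (s : ℕ) = i - 1 <;> by_cases hs2 : (s : ℕ) = i <;>
      simp only [hr1, hr2, hs1, hs2, and_self, and_true, true_and, and_false, false_and,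
        if_true, if_false, ite_true, ite_false, Matrix.cons_val', Matrix.cons_val_zero,
        Matrix.cons_val_one, Matrix.head_cons, Matrix.head_fin_const, Matrix.empty_val',
        Matrix.cons_val_fin_one]
    all_goals first
      | omega
      | ring1
      | (split_ifs <;> (first | omega | ring1 | (field_simp; ring1) | field_simp))
      | (field_simp; ring1)
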